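/- Let (L_{k,j})_{k≥1, j≥1} be a doubly indexed family of independent, identically distributed nonnegative real random variables with common law μ, let F(t) := μ((−∞,t]) and, for q ∈ (0,1], let ℓ_q := inf{t ∈ ℝ : F(t) ≥ q}. Let (a_k)_{k≥1} be positive integers. (i) If ∑_{k=1}^∞ a_k/a_{k+1} < ∞, then almost surely for all sufficiently large k: min_{1≤j≤a_k} L_{k,j} ≥ ℓ_{1/a_{k+1}}. (ii) If ∑_{k=1}^∞ exp(−a_{k+1}/a_k) < ∞, then almost surely for all sufficiently large k: min_{1≤j≤a_{k+1}} L_{k,j} ≤ ℓ_{1/a_k}. -/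

import Mathlib

open MeasureTheory ProbabilityTheory Filter Topology
open scoped ENNReal

lemma quantile_bddBelow (ν : Measure ℝ) [IsProbabilityMeasure ν] {q : ℝ} (hq : 0 < q)
    (h0 : ν (Set.Iio 0) = 0) :
    {t : ℝ | q ≤ (ν (Set.Iic t)).toReal} ⊆ Set.Ici 0 := by
  intro t ht
  by_contra hlt
  rw [Set.mem_Ici, not_le] at hlt
  have h1 : ν (Set.Iic t) = 0 :=
    measure_mono_null (fun x hx => lt_of_le_of_lt hx hlt) h0
  simp only [Set.mem_setOf_eq, h1, ENNReal.toReal_zero] at ht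
  linarith

lemma quantile_Iio (ν : Measure ℝ) [IsProbabilityMeasure ν] {q : ℝ} (hq : 0 < q)
    (h0 : ν (Set.Iio 0) = 0) :
    ν (Set.Iio (sInf {t : ℝ | q ≤ (ν (Set.Iic t)).toReal})) ≤ ENNReal.ofReal q := by
  set S := {t : ℝ | q ≤ (ν (Set.Iic t)).toReal} with hS
  have hbdd : BddBelow S := ⟨0, quantile_bddBelow ν hq h0⟩
  set l := sInf S with hl
  have key : ∀ t, t < l → ν (Set.Iic t) ≤ ENNReal.ofReal q := by
    intro t ht
    have htS : t ∉ S := fun h => absurd (csInf_le hbdd h) (not_le.mpr ht)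
    simp only [hS, Set.mem_setOf_eq, not_le] at htS
    calc ν (Set.Iic t) = ENNReal.ofReal ((ν (Set.Iic t)).toReal) :=
          (ENNReal.ofReal_toReal (measure_ne_top ν _)).symm
      _ ≤ ENNReal.ofReal q := ENNReal.ofReal_le_ofReal htS.le
  have hunion : Set.Iio l = ⋃ n : ℕ, Set.Iic (l - 1 / (n + 1)) := by
    ext x
    simp only [Set.mem_Iio, Set.mem_iUnion, Set.mem_Iic]
    constructor
    · intro hx
      obtain ⟨n, hn⟩ := exists_nat_one_div_lt (sub_pos.mpr hx)
      exact ⟨n, by linarith⟩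
    · rintro ⟨n, hn⟩
      have : (0:ℝ) < 1 / (n + 1) := by positivity
      linarith
  rw [hunion, Monotone.measure_iUnion ?mono]
  · exact iSup_le fun n => key _ (sub_lt_self _ (by positivity))
  case mono =>
    intro n m hnm
    apply Set.Iic_subset_Iic.mpr
    have hc : (n:ℝ) ≤ m := Nat.cast_le.mpr hnm
    have : (1:ℝ) / (m + 1) ≤ 1 / (n + 1) :=
      one_div_le_one_div_of_le (by positivity) (by linarith)
    linarith

lemma quantile_Iic (ν : Measure ℝ) [IsProbabilityMeasure ν] {q : ℝ} (hq : 0 < q)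
    (hne : {t : ℝ | q ≤ (ν (Set.Iic t)).toReal}.Nonempty)
    (h0 : ν (Set.Iio 0) = 0) :
    ENNReal.ofReal q ≤ ν (Set.Iic (sInf {t : ℝ | q ≤ (ν (Set.Iic t)).toReal})) := by
  set S := {t : ℝ | q ≤ (ν (Set.Iic t)).toReal} with hS
  have hbdd : BddBelow S := ⟨0, quantile_bddBelow ν hq h0⟩
  set l := sInf S with hl
  have key : ∀ ε : ℝ, 0 < ε → ENNReal.ofReal q ≤ ν (Set.Iic (l + ε)) := by
    intro ε hε
    have : sInf S < l + ε := by linarith [hl]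
    obtain ⟨t, htS, htl⟩ := (csInf_lt_iff hbdd hne).mp this
    simp only [hS, Set.mem_setOf_eq] at htS
    calc ENNReal.ofReal q ≤ ENNReal.ofReal ((ν (Set.Iic t)).toReal) :=
          ENNReal.ofReal_le_ofReal htS
      _ = ν (Set.Iic t) := ENNReal.ofReal_toReal (measure_ne_top ν _)
      _ ≤ ν (Set.Iic (l + ε)) := measure_mono (Set.Iic_subset_Iic.mpr htl.le)
  have hinter : Set.Iic l = ⋂ n : ℕ, Set.Iic (l + 1 / (n + 1)) := by
    ext x
    simp only [Set.mem_Iic, Set.mem_iInter]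
    constructor
    · intro hx n
      have : (0:ℝ) < 1 / (n + 1) := by positivity
      linarith
    · intro h
      by_contra hlt
      push_neg at hlt
      obtain ⟨n, hn⟩ := exists_nat_one_div_lt (sub_pos.mpr hlt)
      linarith [h n]
  rw [hinter, Antitone.measure_iInter ?anti (fun n => measurableSet_Iic.nullMeasurableSet)
    ⟨0, measure_ne_top ν _⟩]
  · exact le_iInf fun n => key _ (by positivity)
  case anti =>
    intro n m hnm
    apply Set.Iic_subset_Iic.mpr
    have hc : (n:ℝ) ≤ m := Nat.cast_le.mpr hnm
    have : (1:ℝ) / (m + 1) ≤ 1 / (n + 1) :=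
      one_div_le_one_div_of_le (by positivity) (by linarith)
    linarith

lemma quantile_nonempty (ν : Measure ℝ) [IsProbabilityMeasure ν] {q : ℝ} (hq : 0 < q) (hq1 : q < 1) :
    {t : ℝ | q ≤ (ν (Set.Iic t)).toReal}.Nonempty := by
  have h1 : Tendsto (fun t : ℝ => ν (Set.Iic t)) atTop (𝓝 (ν Set.univ)) :=
    tendsto_measure_Iic_atTop ν
  rw [measure_univ] at h1
  have hlt : ENNReal.ofReal q < 1 := by
    rcases le_or_gt q 0 with h | h
    · simpa [ENNReal.ofReal_eq_zero.mpr h] using one_pos (α := ℝ≥0∞)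
    · rw [← ENNReal.ofReal_one]
      exact ENNReal.ofReal_lt_ofReal_iff_of_nonneg h.le |>.mpr hq1
  have := h1.eventually_const_lt hlt
  obtain ⟨t, ht⟩ := this.exists
  refine ⟨t, ?_⟩
  simp only [Set.mem_setOf_eq]
  calc q = (ENNReal.ofReal q).toReal := (ENNReal.toReal_ofReal hq.le).symm
    _ ≤ (ν (Set.Iic t)).toReal :=
      ENNReal.toReal_le_toReal ENNReal.ofReal_ne_top (measure_ne_top ν _) |>.mpr ht.le

set_option maxHeartbeats 1000000 in
/-- **(5.24)–(5.25) and (6.28)–(6.29).** For i.i.d. nonnegative `(L_{k,j})` with common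
law `ν`, CDF `F(t) = ν(-∞,t]`, generalized inverse `ℓ_q = inf{t : F(t) ≥ q}`, and positive
integers `(a_k)`:
(i) if `∑_k a_k/a_{k+1} < ∞` then a.s. eventually `min_{1≤j≤a_k} L_{k,j} ≥ ℓ_{1/a_{k+1}}`;
(ii) if `∑_k exp(-a_{k+1}/a_k) < ∞` then a.s. eventually `min_{1≤j≤a_{k+1}} L_{k,j} ≤ ℓ_{1/a_k}`. -/
theorem stmt9 {Ω : Type*} [MeasurableSpace Ω] (μ : Measure Ω) [IsProbabilityMeasure μ]
    (L : ℕ → ℕ → Ω → ℝ) (hmeas : ∀ k j, Measurable (L k j))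
    (hnonneg : ∀ k j ω, 0 ≤ L k j ω)
    (hindep : iIndepFun (fun p : ℕ × ℕ => L p.1 p.2) μ)
    (ν : Measure ℝ) [IsProbabilityMeasure ν]
    (hid : ∀ k j, Measure.map (L k j) μ = ν)
    (a : ℕ → ℕ) (hapos : ∀ k, 0 < a k) :
    (Summable (fun k : ℕ => (a k : ℝ) / (a (k + 1) : ℝ)) →
      ∀ᵐ ω ∂μ, ∀ᶠ k in atTop,
        sInf {t : ℝ | (1 : ℝ) / (a (k + 1) : ℝ) ≤ (ν (Set.Iic t)).toReal} ≤
          (Finset.Icc 1 (a k)).inf' (Finset.nonempty_Icc.mpr (hapos k))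
            (fun j => L k j ω)) ∧
    (Summable (fun k : ℕ => Real.exp (-((a (k + 1) : ℝ) / (a k : ℝ)))) →
      ∀ᵐ ω ∂μ, ∀ᶠ k in atTop,
        (Finset.Icc 1 (a (k + 1))).inf' (Finset.nonempty_Icc.mpr (hapos (k + 1)))
            (fun j => L k j ω) ≤
          sInf {t : ℝ | (1 : ℝ) / (a k : ℝ) ≤ (ν (Set.Iic t)).toReal}) := by
  have hmap : ∀ k j (s : Set ℝ), MeasurableSet s → μ (L k j ⁻¹' s) = ν s := by
    intro k j s hs
    rw [← hid k j, Measure.map_apply (hmeas k j) hs]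
  have h0 : ν (Set.Iio 0) = 0 := by
    rw [← hmap 0 0 _ measurableSet_Iio]
    have he : L 0 0 ⁻¹' Set.Iio 0 = ∅ := by
      ext ω
      simp only [Set.mem_preimage, Set.mem_Iio, Set.mem_empty_iff_false, iff_false, not_lt]
      exact hnonneg 0 0 ω
    simp [he]
  constructor
  · -- Part (i)
    intro hsum
    set s : ℕ → Set Ω := fun k =>
      {ω | (Finset.Icc 1 (a k)).inf' (Finset.nonempty_Icc.mpr (hapos k)) (fun j => L k j ω)
            < sInf {t : ℝ | (1 : ℝ) / (a (k + 1) : ℝ) ≤ (ν (Set.Iic t)).toReal}} with hsdef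
    have hbound : ∀ k, μ (s k) ≤ ENNReal.ofReal ((a k : ℝ) / (a (k + 1) : ℝ)) := by
      intro k
      have hq : (0:ℝ) < 1 / (a (k + 1) : ℝ) :=
        div_pos one_pos (by exact_mod_cast hapos (k + 1))
      set l := sInf {t : ℝ | (1 : ℝ) / (a (k + 1) : ℝ) ≤ (ν (Set.Iic t)).toReal} with hldef
      have hsk : s k = ⋃ j ∈ Finset.Icc 1 (a k), L k j ⁻¹' Set.Iio l := by
        ext ω
        rw [hldef]
        simp only [hsdef, Set.mem_setOf_eq, Finset.inf'_lt_iff, Set.mem_iUnion,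
          Set.mem_preimage, Set.mem_Iio, Finset.mem_Icc, exists_prop]
      rw [hsk]
      calc μ (⋃ j ∈ Finset.Icc 1 (a k), L k j ⁻¹' Set.Iio l)
          ≤ ∑ j ∈ Finset.Icc 1 (a k), μ (L k j ⁻¹' Set.Iio l) :=
            measure_biUnion_finset_le _ _
        _ ≤ ∑ _j ∈ Finset.Icc 1 (a k), ENNReal.ofReal (1 / (a (k + 1) : ℝ)) := by
            refine Finset.sum_le_sum fun j _ => ?_
            rw [hmap k j _ measurableSet_Iio]
            exact quantile_Iio ν hq h0
        _ = (a k : ℝ≥0∞) * ENNReal.ofReal (1 / (a (k + 1) : ℝ)) := by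
            rw [Finset.sum_const, Nat.card_Icc, nsmul_eq_mul]
            norm_num
        _ = ENNReal.ofReal ((a k : ℝ) / (a (k + 1) : ℝ)) := by
            rw [← ENNReal.ofReal_natCast (a k), ← ENNReal.ofReal_mul (by positivity)]
            congr 1
            rw [mul_one_div]
    have htsum : (∑' k, μ (s k)) ≠ ⊤ := by
      refine ne_top_of_le_ne_top ?_ (ENNReal.tsum_le_tsum hbound)
      rw [← ENNReal.ofReal_tsum_of_nonneg (fun k => by positivity) hsum]
      exact ENNReal.ofReal_ne_top
    filter_upwards [ae_eventually_notMem htsum] with ω hω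
    filter_upwards [hω] with k hk
    exact not_lt.mp hk
  · -- Part (ii)
    intro hsum
    have htend : Tendsto (fun k => Real.exp (-((a (k + 1) : ℝ) / (a k : ℝ)))) atTop (𝓝 0) :=
      hsum.tendsto_atTop_zero
    have hev : ∀ᶠ k in atTop, a k < a (k + 1) := by
      filter_upwards [htend.eventually_lt_const (Real.exp_pos (-1))] with k hk
      have h1 : -((a (k + 1) : ℝ) / (a k : ℝ)) < -1 := Real.exp_lt_exp.mp hk
      have hak : (0:ℝ) < a k := by exact_mod_cast hapos k
      have h2 : (1:ℝ) < (a (k + 1) : ℝ) / (a k : ℝ) := by linarith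
      have h3 : (a k : ℝ) < (a (k + 1) : ℝ) := (one_lt_div hak).mp h2
      exact_mod_cast h3
    obtain ⟨K0, hK0⟩ := eventually_atTop.mp hev
    set K := K0 + 1 with hKdef
    have hK : ∀ k, K ≤ k → 2 ≤ a k := by
      intro k hk
      obtain ⟨m, rfl⟩ : ∃ m, k = m + 1 := ⟨k - 1, by omega⟩
      have h1 := hK0 m (by omega)
      have h2 := hapos m
      omega
    set s : ℕ → Set Ω := fun k =>
      {ω | sInf {t : ℝ | (1 : ℝ) / (a k : ℝ) ≤ (ν (Set.Iic t)).toReal}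
            < (Finset.Icc 1 (a (k + 1))).inf' (Finset.nonempty_Icc.mpr (hapos (k + 1)))
                (fun j => L k j ω)} with hsdef
    have hbound : ∀ k, K ≤ k →
        μ (s k) ≤ ENNReal.ofReal (Real.exp (-((a (k + 1) : ℝ) / (a k : ℝ)))) := by
      intro k hk2
      have hak : (0:ℝ) < a k := by exact_mod_cast hapos k
      have hq : (0:ℝ) < 1 / (a k : ℝ) := div_pos one_pos hak
      have hq1 : (1:ℝ) / (a k : ℝ) < 1 := by
        rw [div_lt_one hak]
        exact_mod_cast lt_of_lt_of_le one_lt_two (by exact_mod_cast hK k hk2)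
      set l := sInf {t : ℝ | (1 : ℝ) / (a k : ℝ) ≤ (ν (Set.Iic t)).toReal} with hldef
      -- independence product
      have hsk : s k = ⋂ j ∈ Finset.Icc 1 (a (k + 1)),
          (fun p : ℕ × ℕ => L p.1 p.2) (k, j) ⁻¹' Set.Ioi l := by
        ext ω
        rw [hldef]
        simp only [hsdef, Set.mem_setOf_eq, Finset.lt_inf'_iff, Set.mem_iInter,
          Set.mem_preimage, Set.mem_Ioi, Finset.mem_Icc]
      have hμeq : μ (s k) = ν (Set.Ioi l) ^ (a (k + 1)) := by
        rw [hsk]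
        have hset : (⋂ j ∈ Finset.Icc 1 (a (k + 1)),
            (fun p : ℕ × ℕ => L p.1 p.2) (k, j) ⁻¹' Set.Ioi l)
            = ⋂ p ∈ (Finset.Icc 1 (a (k + 1))).image (fun j => (k, j)),
                (fun p : ℕ × ℕ => L p.1 p.2) p ⁻¹' Set.Ioi l := by
          rw [Finset.set_biInter_finset_image]
        rw [hset, hindep.measure_inter_preimage_eq_mul
          ((Finset.Icc 1 (a (k + 1))).image (fun j => (k, j)))
          (sets := fun _ => Set.Ioi l) (fun i _ => measurableSet_Ioi)]
        rw [Finset.prod_image (by intro x _ y _ h; exact (Prod.mk.injEq _ _ _ _).mp h |>.2)]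
        have hfac : ∀ j, μ ((fun p : ℕ × ℕ => L p.1 p.2) (k, j) ⁻¹' Set.Ioi l)
            = ν (Set.Ioi l) := fun j => hmap k j _ measurableSet_Ioi
        simp only [hfac]
        rw [Finset.prod_const, Nat.card_Icc, Nat.add_sub_cancel]
      have hIic := quantile_Iic ν hq (quantile_nonempty ν hq hq1) h0
      have hFl : (1:ℝ) / (a k : ℝ) ≤ (ν (Set.Iic l)).toReal := by
        have h := (ENNReal.toReal_le_toReal ENNReal.ofReal_ne_top
          (measure_ne_top ν _)).mpr hIic
        rwa [ENNReal.toReal_ofReal hq.le] at h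
      have hadd : (ν (Set.Iic l)).toReal + (ν (Set.Ioi l)).toReal = 1 := by
        rw [← ENNReal.toReal_add (measure_ne_top ν _) (measure_ne_top ν _),
          ← measure_union (Set.Iic_disjoint_Ioi le_rfl) measurableSet_Ioi,
          Set.Iic_union_Ioi, measure_univ, ENNReal.toReal_one]
      set r := (ν (Set.Ioi l)).toReal with hrdef
      have hr0 : 0 ≤ r := ENNReal.toReal_nonneg
      have hr1 : r ≤ 1 - 1 / (a k : ℝ) := by linarith
      have hμs : μ (s k) = ENNReal.ofReal (r ^ (a (k + 1))) := by
        rw [hμeq, ENNReal.ofReal_pow hr0, hrdef, ENNReal.ofReal_toReal (measure_ne_top ν _)]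
      rw [hμs]
      apply ENNReal.ofReal_le_ofReal
      calc r ^ (a (k + 1)) ≤ (1 - 1 / (a k : ℝ)) ^ (a (k + 1)) :=
            pow_le_pow_left₀ hr0 hr1 _
        _ ≤ (Real.exp (-(1 / (a k : ℝ)))) ^ (a (k + 1)) := by
            apply pow_le_pow_left₀ (by linarith)
            linarith [Real.add_one_le_exp (-(1 / (a k : ℝ)))]
        _ = Real.exp ((a (k + 1) : ℝ) * (-(1 / (a k : ℝ)))) :=
            (Real.exp_nat_mul _ _).symm
        _ = Real.exp (-((a (k + 1) : ℝ) / (a k : ℝ))) := by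
            congr 1
            field_simp
    clear_value s
    have htsum : (∑' n : ℕ, μ (s (n + K))) ≠ ⊤ := by
      have hb : ∀ n : ℕ, μ (s (n + K)) ≤
          ENNReal.ofReal (Real.exp (-((a (n + K + 1) : ℝ) / (a (n + K) : ℝ)))) :=
        fun n => hbound _ (by omega)
      refine ne_top_of_le_ne_top ?_ (ENNReal.tsum_le_tsum hb)
      have hs2 : Summable (fun n : ℕ => Real.exp (-((a (n + K + 1) : ℝ) / (a (n + K) : ℝ)))) :=
        (summable_nat_add_iff (f := fun m : ℕ => Real.exp (-((a (m + 1) : ℝ) / (a m : ℝ)))) K).mpr hsum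
      rw [← ENNReal.ofReal_tsum_of_nonneg (fun n => (Real.exp_pos _).le) hs2]
      exact ENNReal.ofReal_ne_top
    filter_upwards [ae_eventually_notMem htsum] with ω hω
    rw [hsdef] at hω
    obtain ⟨N, hN⟩ := eventually_atTop.mp hω
    rw [eventually_atTop]
    refine ⟨N + K, fun k hk => ?_⟩
    have h1 := hN (k - K) (by omega)
    rw [show k - K + K = k by omega] at h1
    exact not_lt.mp h1
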